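/- arXiv:1602.05787 — 5 statements merged into one kernel-verified Lean document; each statement's English description precedes it below -/
import Mathlib

section
/- For every complex root of unity ζ (i.e., ζ^n = 1 for some positive integer n), one has ζ^4 + ζ^3 ≠ 1. Equivalently, no root of the polynomial X^4 + X^3 - 1 is a root of unity. -/
theorem no_root_of_unity_root (ζ : ℂ) (h : ∃ n : ℕ, 0 < n ∧ ζ ^ n = 1) :
    ζ ^ 4 + ζ ^ 3 ≠ 1 := by
  obtain ⟨n, hn, hzn⟩ := h
  intro heq
  have hζ0 : ζ ≠ 0 := by
    rintro rfl
    rw [zero_pow hn.ne'] at hzn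
    exact zero_ne_one hzn
  have habs : ‖ζ‖ = 1 := by
    have h1 : ‖ζ‖ ^ n = 1 := by
      rw [← norm_pow, hzn, norm_one]
    have h2 := pow_eq_one_iff_cases.mp h1
    rcases h2 with h | h | h
    · omega
    · exact h
    · nlinarith [norm_nonneg ζ, h.1]
  have hconj : (starRingEnd ℂ) ζ = ζ⁻¹ := (Complex.inv_eq_conj habs).symm
  have heq2 : ζ⁻¹ ^ 4 + ζ⁻¹ ^ 3 = 1 := by
    have := congrArg (starRingEnd ℂ) heq
    simpa [map_add, map_pow, hconj] using this
  have heq3 : ζ ^ 4 - ζ - 1 = 0 := by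
    field_simp at heq2
    have h4 : ζ ^ 3 * (ζ ^ 4 - ζ - 1) = 0 := by linear_combination -ζ ^ 3 * heq2
    rcases mul_eq_zero.mp h4 with h | h
    · exact absurd (pow_eq_zero_iff (by norm_num) |>.mp h) hζ0
    · exact h
  have : (1 : ℂ) = 0 := by
    linear_combination (ζ^3 - ζ^2) * heq + (-ζ^3 + ζ - 1) * heq3
  exact one_ne_zero this
end

section
/- For every positive integer n, the polynomial X^4 + X^3 - 1 does not divide X^n - 1 in ℚ[X]. -/
open Polynomial

theorem not_dvd_X_pow_sub_one (n : ℕ) (hn : 0 < n) :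
    ¬ ((X ^ 4 + X ^ 3 - 1 : ℚ[X]) ∣ X ^ n - 1) := by
  intro h
  have h' : (X ^ 4 + X ^ 3 - 1 : ℝ[X]) ∣ X ^ n - 1 := by
    have := Polynomial.map_dvd (algebraMap ℚ ℝ) h
    simpa using this
  -- find a real root in (0,1)
  have hcont : ContinuousOn (fun x : ℝ => x ^ 4 + x ^ 3 - 1) (Set.Icc 0 1) := by
    fun_prop
  have hIVT := intermediate_value_Icc (by norm_num : (0:ℝ) ≤ 1) hcont
  have h0 : (0:ℝ) ∈ Set.Icc ((fun x : ℝ => x^4 + x^3 - 1) 0)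
      ((fun x : ℝ => x^4 + x^3 - 1) 1) := by
    simp only [Set.mem_Icc]; norm_num
  obtain ⟨r, hr, hr0⟩ := hIVT h0
  have hroot : r ^ 4 + r ^ 3 - 1 = 0 := hr0
  have hrpos : 0 < r := by
    rcases lt_or_eq_of_le hr.1 with h | h
    · exact h
    · exfalso; rw [← h] at hroot; norm_num at hroot
  have hrlt : r < 1 := by
    rcases lt_or_eq_of_le hr.2 with h | h
    · exact h
    · exfalso; rw [h] at hroot; norm_num at hroot
  obtain ⟨q, hq⟩ := h'
  have := congrArg (fun p => Polynomial.eval r p) hq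
  simp only [eval_mul, eval_sub, eval_add, eval_pow, eval_X, eval_one] at this
  rw [hroot, zero_mul] at this
  have hrn : r ^ n < 1 := pow_lt_one₀ hrpos.le hrlt hn.ne'
  linarith
end

section
/- Let R be a commutative ring, and let u, v, t, A, B be units of R satisfying the two relations u²v² + u²v·B⁻¹ = v·t⁻¹·B⁻¹ + A·t⁻²·B⁻¹ and u²v² + u·v²·B⁻¹ = u·t⁻¹·B⁻¹ + A·t⁻²·B⁻¹. Then u² = v² if and only if (u - v)·(A - B) = 0. -/
theorem key_aux {R : Type*} [CommRing R] (u v t A B T Bi : R)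
    (hT : t * T = 1) (hB : B * Bi = 1)
    (h1 : u^2*v^2 + u^2*v*Bi = v*T*Bi + A*T^2*Bi)
    (h2 : u^2*v^2 + u*v^2*Bi = u*T*Bi + A*T^2*Bi) :
    (u - v) * (A - B) = -t * (u^2 - v^2) := by
  linear_combination
    ((-(u-v) + (B*(u*v*t-1)+t*u)*T)*(B*t^2)) * h1
    + (-((B*(u*v*t-1)+t*u)*T)*(B*t^2)) * h2
    + ((-(u-v)+(B*(u*v*t-1)+t*u)*T)*(v*t + 2*A + v*t*(B*Bi-1) + 2*A*(B*Bi-1) + A*(t*T-1) + A*(t*T-1)*(B*Bi-1))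
       + (-((B*(u*v*t-1)+t*u)*T))*(u*t + 2*A + u*t*(B*Bi-1) + 2*A*(B*Bi-1) + A*(t*T-1) + A*(t*T-1)*(B*Bi-1))
       - (B*(u*v*t-1)+t*u)*(u-v)*(u*v*t+1)) * hT
    + ((-(u-v)+(B*(u*v*t-1)+t*u)*T)*(-(u^2*v*t^2) + v*t + A)
       + (-((B*(u*v*t-1)+t*u)*T))*(-(u*v^2*t^2) + u*t + A)) * hB

theorem sq_eq_sq_iff (R : Type*) [CommRing R] (u v t A B : Rˣ)
    (h1 : (u : R) ^ 2 * v ^ 2 + (u : R) ^ 2 * v * (B⁻¹ : Rˣ)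
        = (v : R) * (t⁻¹ : Rˣ) * (B⁻¹ : Rˣ) + (A : R) * ((t⁻¹ : Rˣ) : R) ^ 2 * (B⁻¹ : Rˣ))
    (h2 : (u : R) ^ 2 * v ^ 2 + (u : R) * (v : R) ^ 2 * (B⁻¹ : Rˣ)
        = (u : R) * (t⁻¹ : Rˣ) * (B⁻¹ : Rˣ) + (A : R) * ((t⁻¹ : Rˣ) : R) ^ 2 * (B⁻¹ : Rˣ)) :
    (u : R) ^ 2 = (v : R) ^ 2 ↔ ((u : R) - v) * ((A : R) - B) = 0 := by
  have key : ((u : R) - v) * ((A : R) - B) = -(t : R) * ((u : R)^2 - (v : R)^2) :=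
    key_aux (u : R) v t A B ((t⁻¹ : Rˣ) : R) ((B⁻¹ : Rˣ) : R)
      (Units.mul_inv t) (Units.mul_inv B) h1 h2
  constructor
  · intro h
    rw [key, h]; ring
  · intro h
    have ht : (t : R) * ((u : R)^2 - (v : R)^2) = 0 := by linear_combination key - h
    have h4 : ((t⁻¹ : Rˣ) : R) * ((t : R) * ((u : R)^2 - (v : R)^2)) = 0 := by
      rw [ht, mul_zero]
    have h3 : (u : R)^2 - (v : R)^2 = 0 := by
      linear_combination h4 - ((u : R)^2 - (v : R)^2) * (Units.inv_mul t)
    exact sub_eq_zero.mp h3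
end

section
/- Let K be a linearly ordered field, a, b positive elements of K with a ≠ b, and R = K[u,v]/(u² - a, v² - b). Then for every nonzero integer ℓ, every λ ∈ K, and all ε₁, ε₂ ∈ {0,1}, one has (u + v)^ℓ ≠ λ·u^{ε₁}·v^{ε₂} in R (where the negative powers of the unit u + v are taken in R). -/
open MvPolynomial

noncomputable abbrev QHIdeal (K : Type*) [CommRing K] (a b : K) :
    Ideal (MvPolynomial (Fin 2) K) :=
  Ideal.span {X 0 ^ 2 - C a, X 1 ^ 2 - C b}

noncomputable abbrev QHRing (K : Type*) [CommRing K] (a b : K) : Type _ :=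
  MvPolynomial (Fin 2) K ⧸ QHIdeal K a b

noncomputable def uQH (K : Type*) [CommRing K] (a b : K) : QHRing K a b :=
  Ideal.Quotient.mk (QHIdeal K a b) (X 0)

noncomputable def vQH (K : Type*) [CommRing K] (a b : K) : QHRing K a b :=
  Ideal.Quotient.mk (QHIdeal K a b) (X 1)

section Aux

variable {K : Type*} [Field K] [LinearOrder K] [IsStrictOrderedRing K]

/-- coefficients of `((a+b) + 2γ)^n = p n + q n * γ` where `γ^2 = a*b`. -/
noncomputable def pqAux (a b : K) : ℕ → K × K
  | 0 => (1, 0)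
  | n + 1 =>
    ((a + b) * (pqAux a b n).1 + 2 * a * b * (pqAux a b n).2,
     (a + b) * (pqAux a b n).2 + 2 * (pqAux a b n).1)

lemma pqAux_pos (a b : K) (ha : 0 < a) (hb : 0 < b) :
    ∀ n, 0 < (pqAux a b n).1 ∧ 0 ≤ (pqAux a b n).2
  | 0 => by simp [pqAux]
  | n + 1 => by
    obtain ⟨hp, hq⟩ := pqAux_pos a b ha hb n
    constructor
    · simp only [pqAux]
      have h1 : 0 < (a + b) * (pqAux a b n).1 := mul_pos (by linarith) hp
      have h2 : 0 ≤ 2 * a * b * (pqAux a b n).2 :=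
        mul_nonneg (by positivity) hq
      linarith
    · simp only [pqAux]
      have h1 : 0 < (a + b) * (pqAux a b n).1 := mul_pos (by linarith) hp
      have h2 : 0 ≤ (a + b) * (pqAux a b n).2 := mul_nonneg (by linarith) hq
      linarith

lemma pqAux_snd_pos (a b : K) (ha : 0 < a) (hb : 0 < b) (n : ℕ) :
    0 < (pqAux a b (n + 1)).2 := by
  obtain ⟨hp, hq⟩ := pqAux_pos a b ha hb n
  simp only [pqAux]
  have h1 : 0 < 2 * (pqAux a b n).1 := by linarith
  have h2 : 0 ≤ (a + b) * (pqAux a b n).2 := mul_nonneg (by linarith) hq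
  linarith

lemma pqAux_expand {L : Type*} [CommRing L] (i : K →+* L) (a b : K) (γ : L)
    (hγ : γ ^ 2 = i a * i b) : ∀ n : ℕ,
    (i a + i b + 2 * γ) ^ n = i (pqAux a b n).1 + i (pqAux a b n).2 * γ ∧
    (i a + i b - 2 * γ) ^ n = i (pqAux a b n).1 - i (pqAux a b n).2 * γ
  | 0 => by simp [pqAux]
  | n + 1 => by
    obtain ⟨h1, h2⟩ := pqAux_expand i a b γ hγ n
    constructor
    · rw [pow_succ, h1]
      simp only [pqAux, map_add, map_mul, map_ofNat]
      linear_combination (2 * i (pqAux a b n).2) * hγ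
    · rw [pow_succ, h2]
      simp only [pqAux, map_add, map_mul, map_ofNat]
      linear_combination (2 * i (pqAux a b n).2) * hγ

end Aux

theorem zpow_u_add_v_ne (K : Type*) [Field K] [LinearOrder K] [IsStrictOrderedRing K] (a b : K)
    (ha : 0 < a) (hb : 0 < b) (hab : a ≠ b)
    (w : (QHRing K a b)ˣ) (hw : (w : QHRing K a b) = uQH K a b + vQH K a b)
    (ℓ : ℤ) (hℓ : ℓ ≠ 0) (lam : K) (ε₁ ε₂ : ℕ) (hε₁ : ε₁ ≤ 1) (hε₂ : ε₂ ≤ 1) :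
    ((w ^ ℓ : (QHRing K a b)ˣ) : QHRing K a b) ≠
      algebraMap K (QHRing K a b) lam * uQH K a b ^ ε₁ * vQH K a b ^ ε₂ := by
  intro h
  set L := AlgebraicClosure K with hL
  set i : K →+* L := algebraMap K L with hi
  have hinj : Function.Injective i := i.injective
  obtain ⟨α, hα⟩ := IsAlgClosed.exists_pow_nat_eq (k := L) (i a) (n := 2) (by norm_num)
  obtain ⟨β, hβ⟩ := IsAlgClosed.exists_pow_nat_eq (k := L) (i b) (n := 2) (by norm_num)
  have hia : i a ≠ 0 := by
    simpa using (map_ne_zero i).mpr ha.ne'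
  have hib : i b ≠ 0 := by
    simpa using (map_ne_zero i).mpr hb.ne'
  have hα0 : α ≠ 0 := by intro h0; rw [h0] at hα; simp at hα; exact hia hα.symm
  have hβ0 : β ≠ 0 := by intro h0; rw [h0] at hβ; simp at hβ; exact hib hβ.symm
  have hiab : i a ≠ i b := fun hh => hab (hinj hh)
  -- For any pair of square roots, get an algebra hom from the quotient ring.
  have mkHom : ∀ x y : L, x ^ 2 = i a → y ^ 2 = i b →
      ∃ φ : QHRing K a b →ₐ[K] L, φ (uQH K a b) = x ∧ φ (vQH K a b) = y := by
    intro x y hx hy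
    have hker : ∀ p ∈ QHIdeal K a b,
        (aeval ![x, y] : MvPolynomial (Fin 2) K →ₐ[K] L) p = 0 := by
      have hle : QHIdeal K a b ≤
          RingHom.ker ((aeval ![x, y] : MvPolynomial (Fin 2) K →ₐ[K] L) :
            MvPolynomial (Fin 2) K →+* L) := by
        rw [Ideal.span_le]
        rintro p hp
        simp only [Set.mem_insert_iff, Set.mem_singleton_iff] at hp
        rcases hp with rfl | rfl <;>
          simp only [SetLike.mem_coe, RingHom.mem_ker, RingHom.coe_coe, map_sub, map_pow, aeval_X, aeval_C,
            Matrix.cons_val_zero, Matrix.cons_val_one, Matrix.head_cons, sub_eq_zero]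
        · exact hx
        · exact hy
      intro p hp
      exact hle hp
    refine ⟨Ideal.Quotient.liftₐ (QHIdeal K a b) (aeval ![x, y]) hker, ?_, ?_⟩ <;>
      simp [uQH, vQH, Ideal.Quotient.liftₐ_apply, Ideal.Quotient.lift_mk] <;>
      erw [Ideal.Quotient.lift_mk] <;> simp
  -- Main consequence for each choice of square roots.
  have main : ∀ x y : L, x ^ 2 = i a → y ^ 2 = i b → x + y ≠ 0 →
      (x + y) ^ ℓ = i lam * x ^ ε₁ * y ^ ε₂ := by
    intro x y hx hy hxy
    obtain ⟨φ, hu, hv⟩ := mkHom x y hx hy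
    have h2 := congrArg φ h
    rw [map_mul, map_mul, map_pow, map_pow, hu, hv, AlgHom.commutes] at h2
    have hval : ((Units.map (φ : QHRing K a b →* L) w : Lˣ) : L) = x + y := by
      simp [hw, hu, hv]
    have key : φ ((w ^ ℓ : (QHRing K a b)ˣ) : QHRing K a b) = (x + y) ^ ℓ := by
      have h3 : φ ((w ^ ℓ : (QHRing K a b)ˣ) : QHRing K a b)
          = ((Units.map (φ : QHRing K a b →* L) (w ^ ℓ) : Lˣ) : L) := rfl
      rw [h3, map_zpow, Units.val_zpow_eq_zpow_val, hval]
    rw [key] at h2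
    exact h2
  have hsum : α + β ≠ 0 := by
    intro h0
    have : α = -β := by linear_combination h0
    apply hiab
    rw [← hα, ← hβ, this]; ring
  have hdiff : α + -β ≠ 0 := by
    intro h0
    have : α = β := by linear_combination h0
    apply hiab
    rw [← hα, ← hβ, this]
  have e1 := main α β hα hβ hsum
  have e2 := main α (-β) hα (by rw [neg_pow]; simp [hβ]) hdiff
  -- Square both equations.
  have sq1 : ((α + β) ^ 2) ^ ℓ = (i lam) ^ 2 * (i a) ^ ε₁ * (i b) ^ ε₂ := by
    have : ((α + β) ^ ℓ) ^ (2 : ℕ) = (i lam * α ^ ε₁ * β ^ ε₂) ^ (2 : ℕ) := by rw [e1]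
    rw [← zpow_natCast ((α + β) ^ ℓ) 2, ← zpow_mul, mul_comm ℓ ((2:ℕ):ℤ), zpow_mul,
      zpow_natCast] at this
    rw [this, mul_pow, mul_pow, ← pow_mul α, ← pow_mul β, mul_comm ε₁ 2, mul_comm ε₂ 2,
      pow_mul α, pow_mul β, hα, hβ]
  have sq2 : ((α - β) ^ 2) ^ ℓ = (i lam) ^ 2 * (i a) ^ ε₁ * (i b) ^ ε₂ := by
    have : ((α + -β) ^ ℓ) ^ (2 : ℕ) = (i lam * α ^ ε₁ * (-β) ^ ε₂) ^ (2 : ℕ) := by rw [e2]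
    rw [← zpow_natCast ((α + -β) ^ ℓ) 2, ← zpow_mul, mul_comm ℓ ((2:ℕ):ℤ), zpow_mul,
      zpow_natCast] at this
    have hnb : ((-β) ^ ε₂) ^ (2:ℕ) = (i b) ^ ε₂ := by
      rw [← pow_mul, mul_comm ε₂ 2, pow_mul, neg_pow, ← hβ]; simp
    calc ((α - β) ^ 2) ^ ℓ = ((α + -β) ^ 2) ^ ℓ := by rw [sub_eq_add_neg]
      _ = (i lam) ^ 2 * (i a) ^ ε₁ * (i b) ^ ε₂ := by
          rw [this, mul_pow, mul_pow, hnb, ← pow_mul α, mul_comm ε₁ 2, pow_mul α, hα]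
  set γ : L := α * β with hγdef
  have hγ2 : γ ^ 2 = i a * i b := by
    rw [hγdef]
    linear_combination β ^ 2 * hα + i a * hβ
  have hγ0 : γ ≠ 0 := mul_ne_zero hα0 hβ0
  have hP : (α + β) ^ 2 = i a + i b + 2 * γ := by
    rw [hγdef]; linear_combination hα + hβ
  have hQ : (α - β) ^ 2 = i a + i b - 2 * γ := by
    rw [hγdef]; linear_combination hα + hβ
  have hPQ : (i a + i b + 2 * γ) ^ ℓ = (i a + i b - 2 * γ) ^ ℓ := by
    rw [← hP, ← hQ, sq1, sq2]
  set n : ℕ := ℓ.natAbs with hn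
  have hn0 : n ≠ 0 := Int.natAbs_ne_zero.mpr hℓ
  have hPQn : (i a + i b + 2 * γ) ^ n = (i a + i b - 2 * γ) ^ n := by
    rcases Int.natAbs_eq ℓ with h' | h'
    · rw [h', zpow_natCast, zpow_natCast] at hPQ; exact hPQ
    · rw [h', zpow_neg, zpow_natCast, zpow_neg, zpow_natCast] at hPQ
      exact inv_injective hPQ
  obtain ⟨E1, E2⟩ := pqAux_expand i a b γ hγ2 n
  rw [E1, E2] at hPQn
  obtain ⟨m, hm⟩ := Nat.exists_eq_succ_of_ne_zero hn0
  have hq : (0 : K) < (pqAux a b n).2 := by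
    rw [hm]; exact pqAux_snd_pos a b ha hb m
  have hiq : i (pqAux a b n).2 ≠ 0 := (map_ne_zero i).mpr hq.ne'
  have h2L : (2 : L) ≠ 0 := by
    rw [show (2 : L) = i (2 : K) from (map_ofNat i 2).symm]
    exact (map_ne_zero i).mpr two_ne_zero
  exact (mul_ne_zero (mul_ne_zero h2L hiq) hγ0) (by linear_combination hPQn)
end

section
/- Let A = ℚ[T, T⁻¹] be the ring of Laurent polynomials over ℚ, let m ≥ 1 be an integer, and let B = A[X]/(T^{2m}·X⁴ + T^m·X³ - T⁻¹). Then for every positive integer n and every integer k, the image of X^n·T^k in B is not equal to 1. -/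
open Polynomial LaurentPolynomial

noncomputable def psiR : LaurentPolynomial ℚ →ₐ[ℚ] ℝ :=
  AddMonoidAlgebra.lift ℚ ℝ ℤ 1

lemma psiR_T (n : ℤ) : psiR (T n) = 1 := by
  have : (T n : LaurentPolynomial ℚ) = AddMonoidAlgebra.single n 1 := rfl
  rw [psiR, this, AddMonoidAlgebra.lift_single]
  simp

theorem X_pow_ne_one (m : ℕ) (hm : 1 ≤ m) (n : ℕ) (hn : 0 < n) (k : ℤ) :
    Ideal.Quotient.mk
      (Ideal.span {Polynomial.C (T (2 * m) : LaurentPolynomial ℚ) * X ^ 4 + Polynomial.C (T m) * X ^ 3 - Polynomial.C (T (-1))})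
      (X ^ n * Polynomial.C (T k)) ≠ 1 := by
  -- find a real root α ∈ (0,1) of x^4 + x^3 - 1
  obtain ⟨α, hα, hroot⟩ : ∃ α ∈ Set.Ioo (0:ℝ) 1, α ^ 4 + α ^ 3 - 1 = 0 := by
    have hc : ContinuousOn (fun x : ℝ => x ^ 4 + x ^ 3 - 1) (Set.Icc 0 1) := by
      fun_prop
    have h := intermediate_value_Ioo (by norm_num : (0:ℝ) ≤ 1) hc
    have h0 : (0:ℝ) ∈ Set.Ioo ((0:ℝ) ^ 4 + (0:ℝ) ^ 3 - 1) ((1:ℝ) ^ 4 + (1:ℝ) ^ 3 - 1) := by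
      norm_num
    obtain ⟨α, hα, hroot⟩ := h h0
    exact ⟨α, hα, hroot⟩
  set g : Polynomial (LaurentPolynomial ℚ) :=
    Polynomial.C (T (2 * m) : LaurentPolynomial ℚ) * X ^ 4 + Polynomial.C (T m) * X ^ 3 -
      Polynomial.C (T (-1)) with hg
  set φ : Polynomial (LaurentPolynomial ℚ) →+* ℝ := Polynomial.eval₂RingHom psiR.toRingHom α
    with hφ
  have hφC : ∀ j : ℤ, φ (Polynomial.C (T j)) = 1 := by
    intro j; simp [hφ, psiR_T]
  have hφX : φ X = α := by simp [hφ]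
  have hφg : φ g = 0 := by
    simp only [hg, map_sub, map_add, map_mul, map_pow, hφC, hφX, one_mul]
    exact hroot
  intro h
  rw [show (1 : _) = Ideal.Quotient.mk _ (1 : Polynomial (LaurentPolynomial ℚ)) from rfl,
    Ideal.Quotient.eq, Ideal.mem_span_singleton] at h
  obtain ⟨c, hc⟩ := h
  have : φ (X ^ n * Polynomial.C (T k)) - 1 = 0 := by
    have := congrArg φ hc
    simp only [map_sub, map_one, map_mul, hφg, zero_mul] at this ⊢
    rw [this]
  have hval : α ^ n = 1 := by
    simp only [map_mul, map_pow, hφX, hφC, mul_one, sub_eq_zero] at this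
    exact this
  have : α ^ n < 1 := pow_lt_one₀ hα.1.le hα.2 hn.ne'
  linarith [hval ▸ this]
end
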